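/- arXiv:1501.06955 — 2 statements merged into one kernel-verified Lean document; each statement's English description precedes it below -/
import Mathlib

section
/- Let n ≥ 3, μ ∈ ℂ, and (x₁,…,x_{n−2}) ∈ ℂ^{n−2} with x := ∏_{i=1}^{n−2} xᵢ ∉ [−2,2] and σ := ∑_{i=1}^{n−2} xᵢ² ≠ μ. Let λ be the root of λ² − xλ + 1 = 0 with |λ| > 1, and set H_μ(x₁,…,x_{n−2}) = √(|σ − μ|/|x² − 4|) · 2|λ|²/(|λ| − 1). Let (yₘ)_{m∈ℤ} be a sequence of complex numbers with y_{m−1} + y_{m+1} = x·yₘ and μ = σ + yₘ² + y_{m+1}² − x·yₘ·y_{m+1} for all m ∈ ℤ. Then there exist integers m₁ < m₂ such that |yₘ| ≤ H_μ(x₁,…,x_{n−2}) holds exactly when m₁ ≤ m ≤ m₂; moreover |yₘ| is strictly decreasing for integers m ≤ m₁ and strictly increasing for integers m ≥ m₂. -/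
open scoped BigOperators


set_option maxHeartbeats 1600000 in
/-- Core real lemma: quasiconvexity of `P` sandwiched between geometric bounds. -/
theorem core_interval {r sab H : ℝ} (hr : 1 < r) (hsab : 0 < sab)
    (hH : H = sab * (2 * r ^ 2 / (r - 1)))
    {s P : ℤ → ℝ} (hs0 : ∀ m, 0 < s m) (hsr : ∀ m, s (m + 1) = r * s m)
    (hub : ∀ m, P m ≤ sab * (s m + (s m)⁻¹))
    (hlb1 : ∀ m, sab * (s m - (s m)⁻¹) ≤ P m)
    (hlb2 : ∀ m, sab * ((s m)⁻¹ - s m) ≤ P m) :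
    ∃ m₁ m₂ : ℤ, m₁ < m₂ ∧ (∀ m, P m ≤ H ↔ m₁ ≤ m ∧ m ≤ m₂) ∧
      (∀ m m', m < m' → m' ≤ m₁ → P m' < P m) ∧
      (∀ m m', m₂ ≤ m → m < m' → P m < P m') := by
  have r0 : (0:ℝ) < r := by linarith
  have r1 : (0:ℝ) < r - 1 := by linarith
  set K : ℝ := 2 * r ^ 2 / (r - 1) with hKdef
  have hK2 : 2 < K := by
    rw [hKdef, lt_div_iff₀ r1]; nlinarith
  have hKpos : 0 < K := by linarith
  -- formula for s
  have hform : ∀ m : ℤ, s m = s 0 * r ^ m := by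
    intro m
    induction m using Int.induction_on with
    | zero => simp
    | succ k ih => rw [hsr k, ih, zpow_add_one₀ (ne_of_gt r0)]; ring
    | pred k ih =>
        have h := hsr (-(k:ℤ) - 1)
        rw [sub_add_cancel] at h
        have hs' : s (-(k:ℤ) - 1) = s (-(k:ℤ)) / r := by
          rw [h]; field_simp
        rw [hs', ih, zpow_sub_one₀ (ne_of_gt r0)]
        field_simp
  -- chainR : if s m is large then P strictly increases at m
  have chainR : ∀ m, K - 1 < s m → P m < P (m + 1) := by
    intro m hs
    have hsm := hs0 m
    have hKs : 2 * r ^ 2 < (s m + 1) * (r - 1) := by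
      have h' : 2 * r ^ 2 / (r - 1) < s m + 1 := by linarith
      calc 2 * r ^ 2 = 2 * r ^ 2 / (r-1) * (r-1) := by field_simp
        _ < (s m + 1) * (r - 1) := by
            exact mul_lt_mul_of_pos_right h' r1
    have hs1 : 1 < s m := by nlinarith
    have hi : (s m)⁻¹ < 1 := inv_lt_one_of_one_lt₀ hs1
    have hj : (r * s m)⁻¹ < 1 := inv_lt_one_of_one_lt₀ (by nlinarith)
    have hrs : 2 < (r - 1) * s m := by nlinarith
    have key : s m + (s m)⁻¹ < r * s m - (r * s m)⁻¹ := by nlinarith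
    have h2 := hlb1 (m + 1)
    rw [hsr m] at h2
    calc P m ≤ sab * (s m + (s m)⁻¹) := hub m
      _ < sab * (r * s m - (r * s m)⁻¹) := by exact mul_lt_mul_of_pos_left key hsab
      _ ≤ P (m+1) := h2
  -- chainL : if (s m)⁻¹ is large then P strictly increases leftward at m
  have hsprev : ∀ m : ℤ, s (m - 1) = s m / r := by
    intro m
    have h := hsr (m - 1); rw [sub_add_cancel] at h
    rw [h]; field_simp
  have chainL : ∀ m, K - 1 < (s m)⁻¹ → P m < P (m - 1) := by
    intro m hs
    have hsm := hs0 m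
    have him : (0:ℝ) < (s m)⁻¹ := inv_pos.mpr hsm
    have hKs : 2 * r ^ 2 < ((s m)⁻¹ + 1) * (r - 1) := by
      have h' : 2 * r ^ 2 / (r - 1) < (s m)⁻¹ + 1 := by linarith
      calc 2 * r ^ 2 = 2 * r ^ 2 / (r-1) * (r-1) := by field_simp
        _ < ((s m)⁻¹ + 1) * (r - 1) := mul_lt_mul_of_pos_right h' r1
    have hi1 : 1 < (s m)⁻¹ := by nlinarith
    have hslt : s m < 1 := by
      have := mul_inv_cancel₀ (ne_of_gt hsm); nlinarith
    have hrs : 2 < (r - 1) * (s m)⁻¹ := by nlinarith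
    have h2 := hlb2 (m - 1)
    rw [hsprev m] at h2
    have hinv2 : (s m / r)⁻¹ = r * (s m)⁻¹ := by
      field_simp
    rw [hinv2] at h2
    have hsr' : s m / r < 1 := by
      rw [div_lt_one r0]; nlinarith
    have key : s m + (s m)⁻¹ < r * (s m)⁻¹ - s m / r := by linarith
    calc P m ≤ sab * (s m + (s m)⁻¹) := hub m
      _ < sab * (r * (s m)⁻¹ - s m / r) := mul_lt_mul_of_pos_left key hsab
      _ ≤ P (m-1) := h2
  -- dichotomy
  have dich : ∀ m, H < P m → K - 1 < s m ∨ K - 1 < (s m)⁻¹ := by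
    intro m hm
    have h1 := hub m
    have hK' : sab * K < sab * (s m + (s m)⁻¹) := by
      rw [← hH]; linarith
    have hKlt : K < s m + (s m)⁻¹ := lt_of_mul_lt_mul_left hK' (le_of_lt hsab)
    by_cases hc : 1 ≤ s m
    · left
      have : (s m)⁻¹ ≤ 1 := inv_le_one_of_one_le₀ hc
      linarith
    · right
      push_neg at hc
      linarith
  -- step lemmas preserving largeness
  have stepRs : ∀ m, K - 1 < s m → K - 1 < s (m + 1) := by
    intro m h; rw [hsr m]; nlinarith [hs0 m]
  have stepLs : ∀ m, K - 1 < (s m)⁻¹ → K - 1 < (s (m - 1))⁻¹ := by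
    intro m h
    rw [hsprev m]
    have : (s m / r)⁻¹ = r * (s m)⁻¹ := by field_simp
    rw [this]
    nlinarith [inv_pos.mpr (hs0 m)]
  -- iterated versions
  have incR : ∀ m, K - 1 < s m → H < P m → ∀ j : ℕ, K - 1 < s (m + j) ∧ H < P (m + j) := by
    intro m h1 h2 j
    induction j with
    | zero => simpa using ⟨h1, h2⟩
    | succ k ih =>
        obtain ⟨ih1, ih2⟩ := ih
        have hs' := stepRs (m + k) ih1
        have hp' : H < P (m + k + 1) := lt_trans ih2 (chainR (m + k) ih1)
        constructor
        · have : (m + (k + 1 : ℕ) : ℤ) = m + k + 1 := by push_cast; ring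
          rw [this]; exact hs'
        · have : (m + (k + 1 : ℕ) : ℤ) = m + k + 1 := by push_cast; ring
          rw [this]; exact hp'
  have incL : ∀ m, K - 1 < (s m)⁻¹ → H < P m → ∀ j : ℕ, K - 1 < (s (m - j))⁻¹ ∧ H < P (m - j) := by
    intro m h1 h2 j
    induction j with
    | zero => simpa using ⟨h1, h2⟩
    | succ k ih =>
        obtain ⟨ih1, ih2⟩ := ih
        have hs' := stepLs (m - k) ih1
        have hp' : H < P (m - k - 1) := lt_trans ih2 (chainL (m - k) ih1)
        constructor
        · have : (m - (k + 1 : ℕ) : ℤ) = m - k - 1 := by push_cast; ring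
          rw [this]; exact hs'
        · have : (m - (k + 1 : ℕ) : ℤ) = m - k - 1 := by push_cast; ring
          rw [this]; exact hp'
  -- window : two consecutive integers in D
  obtain ⟨n, hn1, hn2⟩ := exists_mem_Ico_zpow (inv_pos.mpr (hs0 0)) hr
  -- window bounds : s (n+1) ∈ (1, r], s n ∈ (1/r, 1]
  have hs0pos := hs0 0
  have hwin1a : 1 < s (n + 1) := by
    rw [hform (n + 1)]
    have := mul_lt_mul_of_pos_left hn2 hs0pos
    rw [mul_inv_cancel₀ (ne_of_gt hs0pos)] at this
    exact this
  have hwin1b : s (n + 1) ≤ r := by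
    rw [hform (n + 1), zpow_add_one₀ (ne_of_gt r0)]
    have h1 : s 0 * r ^ n ≤ 1 := by
      have := mul_le_mul_of_nonneg_left hn1 (le_of_lt hs0pos)
      rw [mul_inv_cancel₀ (ne_of_gt hs0pos)] at this
      exact this
    calc s 0 * (r ^ n * r) = (s 0 * r ^ n) * r := by ring
      _ ≤ 1 * r := mul_le_mul_of_nonneg_right h1 (le_of_lt r0)
      _ = r := one_mul r
  have hwin0a : 1 / r < s n := by
    have h := hsr n
    have := hs0 n
    rw [div_lt_iff₀ r0]
    nlinarith
  have hwin0b : s n ≤ 1 := by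
    have h := hsr n
    have := hs0 n
    nlinarith
  -- window membership implies P ≤ H
  have Pwin : ∀ m, 1 / r ≤ s m → s m ≤ r → P m ≤ H := by
    intro m h1 h2
    have hsm := hs0 m
    have hi : (s m)⁻¹ ≤ r := by
      have hr' : r⁻¹ ≤ s m := by rwa [← one_div]
      calc (s m)⁻¹ ≤ (r⁻¹)⁻¹ := by gcongr
        _ = r := inv_inv r
    have hsum : s m + (s m)⁻¹ ≤ K := by
      have h2r : 2 * r ≤ K := by
        rw [hKdef, le_div_iff₀ r1]; nlinarith
      linarith
    calc P m ≤ sab * (s m + (s m)⁻¹) := hub m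
      _ ≤ sab * K := mul_le_mul_of_nonneg_left hsum (le_of_lt hsab)
      _ = H := hH.symm
  have hD1 : P n ≤ H := Pwin n (le_of_lt hwin0a) (by linarith)
  have hD2 : P (n + 1) ≤ H := Pwin (n + 1) (by
      have : 1 / r ≤ 1 := by rw [div_le_one r0]; linarith
      linarith) hwin1b
  -- boundedness above
  obtain ⟨jR, hjR⟩ := pow_unbounded_of_one_lt ((K + 1) / s 0) hr
  have hsMR : K + 1 < s (jR : ℤ) := by
    rw [hform (jR : ℤ), zpow_natCast]
    rw [div_lt_iff₀ hs0pos] at hjR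
    nlinarith
  have hPMR : H < P (jR : ℤ) := by
    have hs1 : 1 < s (jR : ℤ) := by linarith
    have hi : (s (jR : ℤ))⁻¹ < 1 := inv_lt_one_of_one_lt₀ hs1
    have : sab * K < sab * (s (jR : ℤ) - (s (jR : ℤ))⁻¹) :=
      mul_lt_mul_of_pos_left (by linarith) hsab
    rw [hH]; linarith [hlb1 (jR : ℤ)]
  have bddR : ∀ z : ℤ, P z ≤ H → z ≤ (jR : ℤ) := by
    intro z hz
    by_contra hcon
    push_neg at hcon
    have h := (incR (jR : ℤ) (by linarith) hPMR (z - jR).toNat).2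
    rw [show ((jR : ℤ) + ((z - jR).toNat : ℤ)) = z by omega] at h
    linarith
  -- boundedness below
  obtain ⟨jL, hjL⟩ := pow_unbounded_of_one_lt ((K + 1) * s 0) hr
  have hsML : (s (-(jL : ℤ)))⁻¹ > K + 1 := by
    have hf : s (-(jL : ℤ)) = s 0 * (r ^ jL)⁻¹ := by
      rw [hform (-(jL : ℤ)), zpow_neg, zpow_natCast]
    have hrj : (0:ℝ) < r ^ jL := pow_pos r0 jL
    rw [hf, mul_inv_rev, inv_inv]
    have : (s 0)⁻¹ * ((K + 1) * s 0) < (s 0)⁻¹ * r ^ jL :=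
      mul_lt_mul_of_pos_left hjL (inv_pos.mpr hs0pos)
    rw [show (s 0)⁻¹ * ((K + 1) * s 0) = (K+1) * ((s 0)⁻¹ * s 0) by ring,
      inv_mul_cancel₀ (ne_of_gt hs0pos), mul_one] at this
    calc K + 1 < (s 0)⁻¹ * r ^ jL := this
      _ = r ^ jL * (s 0)⁻¹ := by ring
  have hPML : H < P (-(jL : ℤ)) := by
    have hsm := hs0 (-(jL : ℤ))
    have hi1 : 1 < (s (-(jL : ℤ)))⁻¹ := by linarith
    have hslt : s (-(jL : ℤ)) < 1 := by
      have := mul_inv_cancel₀ (ne_of_gt hsm); nlinarith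
    have : sab * K < sab * ((s (-(jL : ℤ)))⁻¹ - s (-(jL : ℤ))) :=
      mul_lt_mul_of_pos_left (by linarith) hsab
    rw [hH]; linarith [hlb2 (-(jL : ℤ))]
  have bddL : ∀ z : ℤ, P z ≤ H → -(jL : ℤ) ≤ z := by
    intro z hz
    by_contra hcon
    push_neg at hcon
    have h := (incL (-(jL : ℤ)) (by linarith) hPML ((-(jL : ℤ)) - z).toNat).2
    rw [show ((-(jL : ℤ)) - (((-(jL : ℤ)) - z).toNat : ℤ)) = z by omega] at h
    linarith
  -- extract m₁ m₂
  obtain ⟨m₂, hm₂D, hm₂max⟩ := Int.exists_greatest_of_bdd ⟨(jR : ℤ), bddR⟩ ⟨n, hD1⟩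
  obtain ⟨m₁, hm₁D, hm₁min⟩ := Int.exists_least_of_bdd ⟨-(jL : ℤ), bddL⟩ ⟨n, hD1⟩
  have hm12 : m₁ < m₂ := by
    have h1 := hm₁min n hD1
    have h2 := hm₂max (n + 1) hD2
    omega
  -- key : any m in [m₁, m₂] is in D
  have hmem : ∀ m, m₁ ≤ m → m ≤ m₂ → P m ≤ H := by
    intro m h1 h2
    by_contra hcon
    push_neg at hcon
    rcases dich m hcon with hR | hL
    · have h := (incR m hR hcon (m₂ - m).toNat).2
      rw [show (m + ((m₂ - m).toNat : ℤ)) = m₂ by omega] at h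
      linarith
    · have h := (incL m hL hcon (m - m₁).toNat).2
      rw [show (m - ((m - m₁).toNat : ℤ)) = m₁ by omega] at h
      linarith
  have hnotD : ∀ m, (m < m₁ ∨ m₂ < m) → H < P m := by
    intro m hm
    by_contra hcon
    push_neg at hcon
    rcases hm with h | h
    · exact absurd (hm₁min m hcon) (by omega)
    · exact absurd (hm₂max m hcon) (by omega)
  -- adjacency lemmas
  have adjR : ∀ k, m₂ ≤ k → P k < P (k + 1) := by
    intro k hk
    rcases eq_or_lt_of_le hk with heq | hlt
    · have h := hnotD (k + 1) (Or.inr (by omega))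
      calc P k ≤ H := by rw [← heq]; exact hm₂D
        _ < P (k + 1) := h
    · have hPk : H < P k := hnotD k (Or.inr hlt)
      rcases dich k hPk with hR | hL
      · exact chainR k hR
      · exfalso
        have h := (incL k hL hPk (k - m₂).toNat).2
        rw [show (k - ((k - m₂).toNat : ℤ)) = m₂ by omega] at h
        linarith [hm₂D]
  have adjL : ∀ k, k ≤ m₁ → P k < P (k - 1) := by
    intro k hk
    rcases eq_or_lt_of_le hk with heq | hlt
    · have h := hnotD (k - 1) (Or.inl (by omega))
      calc P k ≤ H := by rw [heq]; exact hm₁D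
        _ < P (k - 1) := h
    · have hPk : H < P k := hnotD k (Or.inl hlt)
      rcases dich k hPk with hR | hL
      · exfalso
        have h := (incR k hR hPk (m₁ - k).toNat).2
        rw [show (k + ((m₁ - k).toNat : ℤ)) = m₁ by omega] at h
        linarith [hm₁D]
      · exact chainL k hL
  -- telescoping
  have teleR : ∀ j : ℕ, ∀ m, m₂ ≤ m → P m < P (m + j + 1) := by
    intro j
    induction j with
    | zero => intro m hm; simpa using adjR m hm
    | succ k ih =>
        intro m hm
        have h1 := ih m hm
        have h2 := adjR (m + k + 1) (by omega)
        have : (m + ((k : ℕ) + 1 : ℕ) + 1 : ℤ) = m + k + 1 + 1 := by push_cast; ring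
        rw [this]
        linarith
  have teleL : ∀ j : ℕ, ∀ m, m ≤ m₁ → P m < P (m - j - 1) := by
    intro j
    induction j with
    | zero => intro m hm; simpa using adjL m hm
    | succ k ih =>
        intro m hm
        have h1 := ih m hm
        have h2 := adjL (m - k - 1) (by omega)
        have : (m - ((k : ℕ) + 1 : ℕ) - 1 : ℤ) = m - k - 1 - 1 := by push_cast; ring
        rw [this]
        linarith
  refine ⟨m₁, m₂, hm12, ?_, ?_, ?_⟩
  · intro m
    constructor
    · intro h; exact ⟨hm₁min m h, hm₂max m h⟩
    · intro ⟨h1, h2⟩; exact hmem m h1 h2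
  · intro m m' hlt hle
    have h := teleL (m' - m - 1).toNat m' hle
    rw [show (m' - ((m' - m - 1).toNat : ℤ) - 1) = m by omega] at h
    exact h
  · intro m m' hle hlt
    have h := teleR (m' - m - 1).toNat m hle
    rw [show (m + ((m' - m - 1).toNat : ℤ) + 1) = m' by omega] at h
    exact h


theorem rec_unique (x : ℂ) (y g : ℤ → ℂ)
    (hy : ∀ m : ℤ, y (m - 1) + y (m + 1) = x * y m)
    (hg : ∀ m : ℤ, g (m - 1) + g (m + 1) = x * g m)
    (h0 : y 0 = g 0) (h1 : y 1 = g 1) : ∀ m : ℤ, y m = g m := by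
  have pair : ∀ m : ℤ, y m = g m ∧ y (m + 1) = g (m + 1) := by
    intro m
    induction m using Int.induction_on with
    | zero => refine ⟨h0, ?_⟩; simpa using h1
    | succ k ih =>
        obtain ⟨i0, i1⟩ := ih
        refine ⟨i1, ?_⟩
        have a := hy ((k : ℤ) + 1)
        have b := hg ((k : ℤ) + 1)
        rw [add_sub_cancel_right] at a b
        linear_combination a - b + x * i1 - i0
    | pred k ih =>
        obtain ⟨i0, i1⟩ := ih
        constructor
        · have a := hy (-(k : ℤ))
          have b := hg (-(k : ℤ))
          linear_combination a - b + x * i0 - i1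
        · have e : (-(k : ℤ) - 1 + 1) = -(k : ℤ) := by ring
          rw [e]; exact i0
  exact fun m => (pair m).1

set_option maxHeartbeats 1600000 in
/-- Let `x = ∏ xᵢ ∉ [−2,2]`, `σ = ∑ xᵢ² ≠ μ`, let `l` be the root of `l² − x·l + 1 = 0`
with `|l| > 1`, and set `H_μ = √(|σ−μ|/|x²−4|) · 2|l|²/(|l|−1)`. If `(yₘ)` satisfies the
edge and vertex relations along an alternating geodesic, then `{m : |yₘ| ≤ H_μ}` is exactly
an interval `[m₁, m₂]` with `m₁ < m₂`, `|yₘ|` is strictly decreasing for `m ≤ m₁`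
and strictly increasing for `m ≥ m₂`. -/
theorem attracting_interval (n : ℕ) (hn : 3 ≤ n) (μ : ℂ) (xv : Fin (n - 2) → ℂ)
    (x : ℂ) (hx : x = ∏ i, xv i)
    (hxI : x ∉ (fun r : ℝ => (r : ℂ)) '' Set.Icc (-2 : ℝ) 2)
    (σ : ℂ) (hσdef : σ = ∑ i, xv i ^ 2) (hσ : σ ≠ μ)
    (l : ℂ) (hroot : l ^ 2 - x * l + 1 = 0) (hl : 1 < ‖l‖)
    (Hμ : ℝ)
    (hH : Hμ = Real.sqrt (‖σ - μ‖ / ‖x ^ 2 - 4‖) *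
      (2 * ‖l‖ ^ 2 / (‖l‖ - 1)))
    (y : ℤ → ℂ)
    (hrec : ∀ m : ℤ, y (m - 1) + y (m + 1) = x * y m)
    (hvert : ∀ m : ℤ, μ = σ + y m ^ 2 + y (m + 1) ^ 2 - x * y m * y (m + 1)) :
    ∃ m₁ m₂ : ℤ, m₁ < m₂ ∧
      (∀ m : ℤ, ‖y m‖ ≤ Hμ ↔ m₁ ≤ m ∧ m ≤ m₂) ∧
      (∀ m m' : ℤ, m < m' → m' ≤ m₁ → ‖y m'‖ < ‖y m‖) ∧
      (∀ m m' : ℤ, m₂ ≤ m → m < m' → ‖y m‖ < ‖y m'‖) := by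
  have hl0 : l ≠ 0 := by
    intro h; rw [h] at hroot; simp at hroot
  have hu0 : l⁻¹ ≠ 0 := inv_ne_zero hl0
  have hlinv : l * l⁻¹ = 1 := mul_inv_cancel₀ hl0
  have hsum : l + l⁻¹ = x := by
    have h : l * (x - l) = 1 := by linear_combination -hroot
    rw [inv_eq_of_mul_eq_one_right h]; ring
  have hrootu : (l⁻¹) ^ 2 - x * l⁻¹ + 1 = 0 := by
    have he : (l⁻¹) ^ 2 - x * l⁻¹ + 1 = (l ^ 2 - x * l + 1) * (l⁻¹) ^ 2 := by
      field_simp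
      ring
    rw [he, hroot, zero_mul]
  have habsu : ‖l⁻¹‖ < 1 := by
    rw [norm_inv]
    exact inv_lt_one_of_one_lt₀ hl
  have hlne : l - l⁻¹ ≠ 0 := by
    intro h
    have he : l = l⁻¹ := sub_eq_zero.mp h
    rw [← he] at habsu; linarith
  set A := (y 1 - l⁻¹ * y 0) / (l - l⁻¹) with hA
  set B := (l * y 0 - y 1) / (l - l⁻¹) with hB
  set g : ℤ → ℂ := fun m => A * l ^ m + B * (l⁻¹) ^ m with hgdef
  have hgrec : ∀ m : ℤ, g (m - 1) + g (m + 1) = x * g m := by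
    intro m
    simp only [hgdef]
    rw [zpow_add_one₀ hl0 m, zpow_sub_one₀ hl0 m, zpow_add_one₀ hu0 m, zpow_sub_one₀ hu0 m,
      inv_inv]
    linear_combination (A * l ^ m + B * (l⁻¹) ^ m) * hsum
  have h0 : y 0 = g 0 := by
    simp only [hgdef, zpow_zero, mul_one, hA, hB]
    rw [← add_div, eq_div_iff hlne]
    ring
  have h1 : y 1 = g 1 := by
    simp only [hgdef, zpow_one, hA, hB]
    rw [div_mul_eq_mul_div, div_mul_eq_mul_div, ← add_div, eq_div_iff hlne]
    ring
  have key : ∀ m : ℤ, y m = A * l ^ m + B * (l⁻¹) ^ m :=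
    rec_unique x y g hrec hgrec h0 h1
  -- vertex relation at 0 gives the product formula
  have h4 : μ - σ = A * B * (4 - x ^ 2) := by
    have hv := hvert 0
    rw [show ((0:ℤ)+1) = 1 by norm_num] at hv
    rw [key 0, key 1] at hv
    simp only [zpow_zero, zpow_one, mul_one] at hv
    linear_combination hv + A ^ 2 * hroot + B ^ 2 * hrootu + (2 * A * B) * hlinv -
      (x * A * B) * hsum
  have hx2 : x ^ 2 - 4 ≠ 0 := by
    intro h
    have hfac : (x - 2) * (x + 2) = 0 := by linear_combination h
    rcases mul_eq_zero.mp hfac with h' | h'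
    · exact hxI ⟨2, by norm_num, by { push_cast; linear_combination -h' }⟩
    · exact hxI ⟨-2, by norm_num, by { push_cast; linear_combination -h' }⟩
  have hμσ : μ - σ ≠ 0 := sub_ne_zero.mpr (Ne.symm hσ)
  have hA0 : A ≠ 0 := by
    intro h; rw [h] at h4; simp at h4; tauto
  have hB0 : B ≠ 0 := by
    intro h; rw [h] at h4; simp at h4; tauto
  -- real quantities
  set r : ℝ := ‖l‖ with hrdef
  have r0 : (0:ℝ) < r := lt_trans one_pos hl
  have r0' : r ≠ 0 := ne_of_gt r0
  set a : ℝ := ‖A‖ with hadef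
  set b : ℝ := ‖B‖ with hbdef
  have ha : 0 < a := norm_pos_iff.mpr hA0
  have hb : 0 < b := norm_pos_iff.mpr hB0
  set sab : ℝ := Real.sqrt (a * b) with hsabdef
  have hsab : 0 < sab := Real.sqrt_pos.mpr (mul_pos ha hb)
  have habs4 : ‖4 - x ^ 2‖ ≠ 0 := by
    rw [norm_ne_zero_iff]
    intro h; apply hx2; linear_combination -h
  have hHs : Hμ = sab * (2 * r ^ 2 / (r - 1)) := by
    rw [hH, hsabdef]
    congr 2
    rw [show σ - μ = -(μ - σ) by ring, norm_neg, h4, norm_mul, norm_mul,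
      show x ^ 2 - 4 = -(4 - x ^ 2) by ring, norm_neg,
      mul_div_assoc, div_self habs4, mul_one]
  set s : ℤ → ℝ := fun m => Real.sqrt (a / b) * r ^ m with hsdef
  have hq : 0 < Real.sqrt (a / b) := Real.sqrt_pos.mpr (div_pos ha hb)
  have hs0 : ∀ m, 0 < s m := by
    intro m
    have : (0:ℝ) < r ^ m := by positivity
    exact mul_pos hq this
  have hsr : ∀ m : ℤ, s (m + 1) = r * s m := by
    intro m; simp only [hsdef]; rw [zpow_add_one₀ r0']; ring
  have ea : ∀ m : ℤ, a * r ^ m = sab * s m := by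
    intro m
    simp only [hsdef, hsabdef]
    rw [← mul_assoc, ← Real.sqrt_mul (by positivity : (0:ℝ) ≤ a * b)]
    rw [show a * b * (a / b) = a ^ 2 by field_simp]
    rw [Real.sqrt_sq ha.le]
  have eb : ∀ m : ℤ, b * (r ^ m)⁻¹ = sab * (s m)⁻¹ := by
    intro m
    simp only [hsdef, hsabdef]
    rw [mul_inv, ← mul_assoc, ← Real.sqrt_inv, ← Real.sqrt_mul (by positivity : (0:ℝ) ≤ a * b)]
    rw [show a * b * (a / b)⁻¹ = b ^ 2 by field_simp]
    rw [Real.sqrt_sq hb.le]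
  have hterm1 : ∀ m : ℤ, ‖A * l ^ m‖ = a * r ^ m := by
    intro m; rw [norm_mul, norm_zpow]
  have hterm2 : ∀ m : ℤ, ‖B * (l⁻¹) ^ m‖ = b * (r ^ m)⁻¹ := by
    intro m; rw [norm_mul, norm_zpow, norm_inv, inv_zpow]
  have hub : ∀ m, ‖y m‖ ≤ sab * (s m + (s m)⁻¹) := by
    intro m
    rw [key m]
    calc ‖A * l ^ m + B * (l⁻¹) ^ m‖
        ≤ ‖A * l ^ m‖ + ‖B * (l⁻¹) ^ m‖ := norm_add_le _ _
      _ = sab * s m + sab * (s m)⁻¹ := by rw [hterm1 m, hterm2 m, ea m, eb m]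
      _ = sab * (s m + (s m)⁻¹) := by ring
  have hlb1 : ∀ m, sab * (s m - (s m)⁻¹) ≤ ‖y m‖ := by
    intro m
    have e : A * l ^ m = y m + -(B * (l⁻¹) ^ m) := by rw [key m]; ring
    have h := norm_add_le (y m) (-(B * (l⁻¹) ^ m))
    rw [← e, norm_neg] at h
    rw [hterm1 m, hterm2 m, ea m, eb m] at h
    linarith
  have hlb2 : ∀ m, sab * ((s m)⁻¹ - s m) ≤ ‖y m‖ := by
    intro m
    have e : B * (l⁻¹) ^ m = y m + -(A * l ^ m) := by rw [key m]; ring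
    have h := norm_add_le (y m) (-(A * l ^ m))
    rw [← e, norm_neg] at h
    rw [hterm1 m, hterm2 m, ea m, eb m] at h
    linarith
  obtain ⟨m₁, m₂, h12, hiff, hdec, hinc⟩ := core_interval hl hsab hHs hs0 hsr hub hlb1 hlb2
  exact ⟨m₁, m₂, h12, hiff, hdec, hinc⟩
end

section
/- Let n ≥ 3, μ ∈ ℂ, and let a ∈ ℂⁿ with H(a) = μ, with extended Hurwitz map φ = φ_a. Then log⁺|φ| has an upper Fibonacci bound on 𝒜: there exist constants K > 0 and C > 0 such that log⁺|φ(γ)| ≤ K·F(γ) + C for all γ ∈ 𝒜. -/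
open scoped BigOperators

noncomputable section

namespace MarkoffHurwitz

/-- The Markoff–Hurwitz polynomial `H(x) = x₁² + ⋯ + xₙ² − x₁⋯xₙ`. -/
def MH (n : ℕ) (x : Fin n → ℂ) : ℂ := (∑ i, x i ^ 2) - ∏ i, x i

/-- The involution `bᵢ` replacing `xᵢ` by `(∏_{j≠i} x_j) − xᵢ`. -/
def bmap (n : ℕ) (i : Fin n) (x : Fin n → ℂ) : Fin n → ℂ :=
  Function.update x i ((∏ j ∈ Finset.univ.erase i, x j) - x i)

lemma bmap_apply_ne (n : ℕ) (i : Fin n) (x : Fin n → ℂ) {j : Fin n} (h : j ≠ i) :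
    bmap n i x j = x j := Function.update_of_ne h _ _

lemma bmap_apply_same (n : ℕ) (i : Fin n) (x : Fin n → ℂ) :
    bmap n i x i = (∏ j ∈ Finset.univ.erase i, x j) - x i := Function.update_self _ _ _

lemma prod_erase_bmap (n : ℕ) (i : Fin n) (x : Fin n → ℂ) :
    ∏ j ∈ Finset.univ.erase i, bmap n i x j = ∏ j ∈ Finset.univ.erase i, x j :=
  Finset.prod_congr rfl fun j hj => bmap_apply_ne n i x (Finset.ne_of_mem_erase hj)

lemma bmap_involutive (n : ℕ) (i : Fin n) : Function.Involutive (bmap n i) := by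
  intro x; funext j
  rcases eq_or_ne j i with rfl | h
  · rw [bmap_apply_same, prod_erase_bmap, bmap_apply_same]; ring
  · rw [bmap_apply_ne n i _ h, bmap_apply_ne n i x h]

/-- The relators `bᵢ²` of the Coxeter presentation. -/
def MHrels (n : ℕ) : Set (FreeGroup (Fin n)) :=
  Set.range fun i : Fin n => FreeGroup.of i * FreeGroup.of i

/-- The group `Γₙ = ⟨b₁,…,bₙ ∣ bᵢ² = 1⟩`, free product of `n` copies of `ℤ/2`. -/
abbrev Gam (n : ℕ) := PresentedGroup (MHrels n)

/-- The generator `bᵢ` as an element of `Γₙ`. -/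
def gen {n : ℕ} (i : Fin n) : Gam n := PresentedGroup.of i

lemma gen_mul_self {n : ℕ} (i : Fin n) : gen i * gen i = 1 := by
  have h : PresentedGroup.mk (MHrels n) (FreeGroup.of i * FreeGroup.of i) = 1 := by
    have : (FreeGroup.of i * FreeGroup.of i) ∈ Subgroup.normalClosure (MHrels n) :=
      Subgroup.subset_normalClosure ⟨i, rfl⟩
    exact (QuotientGroup.eq_one_iff _).2 this
  simpa [gen, PresentedGroup.of, map_mul] using h

lemma gen_inv {n : ℕ} (i : Fin n) : (gen i)⁻¹ = gen i :=
  inv_eq_of_mul_eq_one_right (gen_mul_self i)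

/-- `bᵢ` as a permutation of `ℂⁿ`. -/
def bperm (n : ℕ) (i : Fin n) : Equiv.Perm (Fin n → ℂ) := (bmap_involutive n i).toPerm

/-- The action of `Γₙ` on `ℂⁿ` by the involutions `bᵢ`. -/
def act (n : ℕ) : Gam n →* Equiv.Perm (Fin n → ℂ) :=
  PresentedGroup.toGroup (f := fun i => bperm n i) (by
    rintro r ⟨i, rfl⟩
    rw [map_mul, FreeGroup.lift_apply_of]
    refine Equiv.ext fun x => ?_
    simpa [bperm, Equiv.Perm.mul_apply] using bmap_involutive n i x)

lemma act_gen (n : ℕ) (i : Fin n) : act n (gen i) = bperm n i :=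
  PresentedGroup.toGroup.of _

/-- The subgroup `⟨bᵢ, b_j⟩` associated to an unordered pair `{i,j}`. -/
def pairSub {n : ℕ} : Sym2 (Fin n) → Subgroup (Gam n) :=
  Sym2.lift ⟨fun i j => Subgroup.closure {gen i, gen j}, fun i j => by
    show Subgroup.closure {gen i, gen j} = Subgroup.closure {gen j, gen i}
    rw [Set.pair_comm]⟩

lemma pairSub_mk {n : ℕ} (i j : Fin n) :
    pairSub s(i, j) = Subgroup.closure {gen i, gen j} := rfl

/-- An alternating geodesic in the Cayley tree of `Γₙ`: an unordered pair `{i,j}`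
of distinct colors together with a coset `g⟨bᵢ,b_j⟩`. -/
structure AltGeo (n : ℕ) where
  pair : Sym2 (Fin n)
  nd : ¬ pair.IsDiag
  coset : Gam n ⧸ pairSub pair

/-- Coordinates outside of a pair `{i,j}`. -/
def offPair {n : ℕ} (s : Sym2 (Fin n)) : Finset (Fin n) :=
  Finset.univ.filter fun k => ¬ k ∈ s

/-- Key invariance: the coordinates off the pair do not change when moving along the coset. -/
lemma coords_eq {n : ℕ} (a : Fin n → ℂ) (s : Sym2 (Fin n)) {t : Gam n}
    (ht : t ∈ pairSub s) (g : Gam n) {k : Fin n} (hk : ¬ k ∈ s) :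
    act n (g * t)⁻¹ a k = act n g⁻¹ a k := by
  induction s using Sym2.ind with
  | _ i j =>
    rw [pairSub_mk] at ht
    induction ht using Subgroup.closure_induction generalizing g with
    | mem x hx =>
      have key : ∀ m : Fin n, m ∈ (s(i, j) : Sym2 (Fin n)) → ∀ g : Gam n,
          act n (g * gen m)⁻¹ a k = act n g⁻¹ a k := by
        intro m hm g
        rw [mul_inv_rev, gen_inv, map_mul, Equiv.Perm.mul_apply, act_gen]
        have hkm : k ≠ m := fun h => hk (h ▸ hm)
        exact bmap_apply_ne n m _ hkm
      rcases hx with rfl | rfl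
      · exact key i (Sym2.mem_mk_left i j) g
      · exact key j (Sym2.mem_mk_right i j) g
    | one => rw [mul_one]
    | mul x y hx hy ihx ihy => rw [← mul_assoc]; rw [ihy, ihx]
    | inv x hx ih =>
      have := ih (g := g * x⁻¹)
      rw [mul_assoc, inv_mul_cancel, mul_one] at this
      exact this.symm

/-- Representative version of the extended Hurwitz map. -/
def phiRep (n : ℕ) (a : Fin n → ℂ) (s : Sym2 (Fin n)) (g : Gam n) : ℂ :=
  ∏ k ∈ offPair s, act n g⁻¹ a k

/-- Representative version of the square sum weight. -/
def sigRep (n : ℕ) (a : Fin n → ℂ) (s : Sym2 (Fin n)) (g : Gam n) : ℂ :=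
  ∑ k ∈ offPair s, (act n g⁻¹ a k) ^ 2

/-- The extended Hurwitz map `φ_a : 𝒜 → ℂ`, `φ(γ) = ∏_{k∉{i,j}} x_k`. -/
def phiA (n : ℕ) (a : Fin n → ℂ) (γ : AltGeo n) : ℂ :=
  Quotient.liftOn' γ.coset (phiRep n a γ.pair) (by
    intro g h hgh
    have hmem : g⁻¹ * h ∈ pairSub γ.pair := QuotientGroup.leftRel_apply.mp hgh
    have : h = g * (g⁻¹ * h) := by group
    rw [this]
    unfold phiRep
    exact (Finset.prod_congr rfl fun k hk =>
      (coords_eq a γ.pair hmem g (Finset.mem_filter.mp hk).2)).symm)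

/-- The square sum weight `σ_a : 𝒜 → ℂ`, `σ(γ) = ∑_{k∉{i,j}} x_k²`. -/
def sigA (n : ℕ) (a : Fin n → ℂ) (γ : AltGeo n) : ℂ :=
  Quotient.liftOn' γ.coset (sigRep n a γ.pair) (by
    intro g h hgh
    have hmem : g⁻¹ * h ∈ pairSub γ.pair := QuotientGroup.leftRel_apply.mp hgh
    have : h = g * (g⁻¹ * h) := by group
    rw [this]
    unfold sigRep
    exact (Finset.sum_congr rfl fun k hk => by
      rw [coords_eq a γ.pair hmem g (Finset.mem_filter.mp hk).2]).symm)

/-- The set `𝒜_φ(K)` of alternating geodesics with `|φ(γ)| ≤ K`. -/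
def AK (n : ℕ) (a : Fin n → ℂ) (K : ℝ) : Set (AltGeo n) :=
  {γ | ‖phiA n a γ‖ ≤ K}

/-- The Bowditch domain `𝒟 ⊆ ℂⁿ`. -/
def BD (n : ℕ) : Set (Fin n → ℂ) :=
  {a | (∀ γ : AltGeo n, phiA n a γ ∉ (fun r : ℝ => (r : ℂ)) '' Set.Icc (-2 : ℝ) 2) ∧
    ∃ K : ℝ, 2 < K ∧ (AK n a K).Finite}



/-- Word length of `g ∈ Γₙ` with respect to the generators `b₁,…,bₙ`. -/
def glen (n : ℕ) (g : Gam n) : ℕ :=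
  sInf {m | ∃ l : List (Fin n), l.length = m ∧ g = (l.map gen).prod}

/-- The alternating geodesic `[g;{i,k}]` through the vertex `g` with colors `{i,k}`. -/
def mkGeo {n : ℕ} (i k : Fin n) (h : i ≠ k) (g : Gam n) : AltGeo n :=
  ⟨s(i, k), by rwa [Sym2.mk_isDiag_iff], QuotientGroup.mk g⟩

/-- `F : 𝒜 → ℕ` is the Fibonacci function relative to the root `v₀ = 1`:
`F(γ) = 1` if the root lies on `γ`, and otherwise `F(γ) = F([v*;{i,k}]) + F([v*;{j,k}])`,
where `v*` is the vertex of `γ` closest to the root and `k` is the label of the first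
edge of the geodesic from `v*` to the root. -/
def IsFib (n : ℕ) (F : AltGeo n → ℕ) : Prop :=
  (∀ γ : AltGeo n, γ.coset = QuotientGroup.mk 1 → F γ = 1) ∧
  (∀ γ : AltGeo n, γ.coset ≠ QuotientGroup.mk 1 →
    ∀ g : Gam n, QuotientGroup.mk g = γ.coset →
      (∀ h : Gam n, QuotientGroup.mk h = γ.coset → glen n g ≤ glen n h) →
      ∀ i j k : Fin n, γ.pair = s(i, j) → ∀ (hki : k ≠ i) (hkj : k ≠ j),
        glen n (g * gen k) < glen n g →
        F γ = F (mkGeo i k hki.symm g) + F (mkGeo j k hkj.symm g))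

/-- `log⁺ t = max (0, log t)`. -/
def logp (t : ℝ) : ℝ := max 0 (Real.log t)

/-- The subgroup `⟨b_j : j ≠ i⟩`. -/
def hatSub (n : ℕ) (i : Fin n) : Subgroup (Gam n) :=
  Subgroup.closure {g | ∃ j : Fin n, j ≠ i ∧ g = gen j}

lemma coord_eq (n : ℕ) (a : Fin n → ℂ) (i : Fin n) {t : Gam n}
    (ht : t ∈ hatSub n i) (g : Gam n) :
    act n (g * t)⁻¹ a i = act n g⁻¹ a i := by
  induction ht using Subgroup.closure_induction generalizing g with
  | mem x hx =>
    obtain ⟨j, hji, rfl⟩ := hx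
    rw [mul_inv_rev, gen_inv, map_mul, Equiv.Perm.mul_apply, act_gen]
    exact bmap_apply_ne n j _ hji.symm
  | one => rw [mul_one]
  | mul x y hx hy ihx ihy => rw [← mul_assoc, ihy, ihx]
  | inv x hx ih =>
    have := ih (g := g * x⁻¹)
    rw [mul_assoc, inv_mul_cancel, mul_one] at this
    exact this.symm

/-- For a coset `X = g⟨b_j : j ≠ i⟩ ∈ 𝒳ᵢ`, the (constant) `i`-th coordinate `φ(X)`. -/
def coordX (n : ℕ) (a : Fin n → ℂ) (i : Fin n) (X : Gam n ⧸ hatSub n i) : ℂ :=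
  Quotient.liftOn' X (fun g => act n g⁻¹ a i) (by
    intro g h hgh
    have hmem : g⁻¹ * h ∈ hatSub n i := QuotientGroup.leftRel_apply.mp hgh
    have hh : h = g * (g⁻¹ * h) := by group
    show act n g⁻¹ a i = act n h⁻¹ a i
    rw [hh, coord_eq n a i hmem g])

/-- `a ∈ ℂⁿ` is dihedral if some point of its `Γₙ`-orbit has two vanishing coordinates. -/
def Dihedral (n : ℕ) (a : Fin n → ℂ) : Prop :=
  ∃ (g : Gam n) (i j : Fin n), i ≠ j ∧ act n g a i = 0 ∧ act n g a j = 0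

/-- The alternating geodesic `γ` contains the edge of color `i` incident to the vertex `g`. -/
def containsEdge {n : ℕ} (γ : AltGeo n) (g : Gam n) (i : Fin n) : Prop :=
  i ∈ γ.pair ∧ (QuotientGroup.mk g : Gam n ⧸ pairSub γ.pair) = γ.coset

/-- Two alternating geodesics share an edge of the tree. -/
def ShareEdge {n : ℕ} (α β : AltGeo n) : Prop :=
  ∃ (g : Gam n) (i : Fin n), containsEdge α g i ∧ containsEdge β g i

/-- A set of alternating geodesics is edge-connected. -/
def EdgeConnected {n : ℕ} (P : Set (AltGeo n)) : Prop :=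
  ∀ α ∈ P, ∀ β ∈ P, ∃ (m : ℕ) (c : ℕ → AltGeo n),
    c 0 = α ∧ c m = β ∧ (∀ t ≤ m, c t ∈ P) ∧ ∀ t < m, ShareEdge (c t) (c (t + 1))

/-- `h(z) = 1 − √(1 − 4/z²)`, with the principal square root (positive real part). -/
def hfun (z : ℂ) : ℂ := 1 - (1 - 4 / z ^ 2) ^ ((1 : ℂ) / 2)

/-- `Complex.abs` as an absolute value, given by the norm. -/
def Complex.abs : AbsoluteValue ℂ ℝ := IsAbsoluteValue.toAbsoluteValue (norm : ℂ → ℝ)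

/-! ### Normal form theory for `Γₙ` -/

section NormalForm

variable {n : ℕ}

/-- Product of generators indexed by a word. -/
def theta (n : ℕ) (l : List (Fin n)) : Gam n := (l.map gen).prod

lemma theta_nil : theta n [] = 1 := rfl

lemma theta_cons (k : Fin n) (l : List (Fin n)) :
    theta n (k :: l) = gen k * theta n l := by
  simp [theta]

lemma theta_singleton (k : Fin n) : theta n [k] = gen k := by
  simp [theta]

lemma theta_append (l m : List (Fin n)) :
    theta n (l ++ m) = theta n l * theta n m := by
  simp [theta]

lemma theta_reverse (l : List (Fin n)) : theta n l.reverse = (theta n l)⁻¹ := by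
  induction l with
  | nil => simp [theta]
  | cons k t ih =>
      rw [List.reverse_cons, theta_append, ih, theta_singleton, theta_cons, mul_inv_rev,
        gen_inv]

/-- One-step reduction: prepend a letter, cancelling if possible. -/
def rcons (k : Fin n) (l : List (Fin n)) : List (Fin n) :=
  match l with
  | [] => [k]
  | a :: t => if a = k then t else k :: a :: t

@[simp] lemma rcons_nil (k : Fin n) : rcons k [] = [k] := rfl

lemma rcons_cons (k a : Fin n) (t : List (Fin n)) :
    rcons k (a :: t) = if a = k then t else k :: a :: t := rfl

lemma red_rcons (k : Fin n) {l : List (Fin n)} (h : l.Chain' (· ≠ ·)) :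
    (rcons k l).Chain' (· ≠ ·) := by
  cases l with
  | nil => exact List.isChain_singleton k
  | cons a t =>
      by_cases hak : a = k
      · rw [rcons_cons, if_pos hak]; exact h.tail
      · rw [rcons_cons, if_neg hak]; unfold List.Chain'; rw [List.isChain_cons_cons]
        exact ⟨fun hh => hak hh.symm, h⟩

lemma rcons_rcons (k : Fin n) {l : List (Fin n)} (h : l.Chain' (· ≠ ·)) :
    rcons k (rcons k l) = l := by
  cases l with
  | nil => simp [rcons_cons]
  | cons a t =>
      by_cases hak : a = k
      · subst hak
        rw [rcons_cons, if_pos rfl]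
        cases t with
        | nil => simp
        | cons b t' =>
            have hab : a ≠ b := (List.isChain_cons_cons.mp h).1
            rw [rcons_cons, if_neg (fun hh => hab hh.symm)]
      · rw [rcons_cons, if_neg hak, rcons_cons, if_pos rfl]

/-- The type of reduced words. -/
def RW (n : ℕ) := {l : List (Fin n) // l.Chain' (· ≠ ·)}

def rconsF (k : Fin n) (w : RW n) : RW n := ⟨rcons k w.1, red_rcons k w.2⟩

lemma rconsF_invol (k : Fin n) : Function.Involutive (rconsF (n := n) k) := fun w =>
  Subtype.ext (rcons_rcons k w.2)

def rconsP (k : Fin n) : Equiv.Perm (RW n) := (rconsF_invol k).toPerm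

/-- The action of `Γₙ` on reduced words. -/
def wact (n : ℕ) : Gam n →* Equiv.Perm (RW n) :=
  PresentedGroup.toGroup (f := fun i => rconsP i) (by
    rintro r ⟨i, rfl⟩
    rw [map_mul, FreeGroup.lift_apply_of]
    refine Equiv.ext fun w => ?_
    simpa [rconsP, Equiv.Perm.mul_apply] using rconsF_invol i w)

lemma wact_gen (i : Fin n) : wact n (gen i) = rconsP i :=
  PresentedGroup.toGroup.of _

/-- The normal form of an element of `Γₙ`. -/
def nf (n : ℕ) (g : Gam n) : List (Fin n) := (wact n g ⟨[], List.isChain_nil⟩).1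

lemma red_nf (g : Gam n) : (nf n g).Chain' (· ≠ ·) := (wact n g _).2

lemma nf_one : nf n (1 : Gam n) = [] := by simp [nf]; rfl

lemma nf_gen_mul (k : Fin n) (g : Gam n) : nf n (gen k * g) = rcons k (nf n g) := by
  simp [nf, map_mul, Equiv.Perm.mul_apply, wact_gen, rconsP, rconsF]; rfl

lemma nf_gen (k : Fin n) : nf n (gen k) = [k] := by
  have := nf_gen_mul k (1 : Gam n)
  rwa [mul_one, nf_one, rcons_nil] at this

lemma nf_theta {l : List (Fin n)} (h : l.Chain' (· ≠ ·)) : nf n (theta n l) = l := by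
  induction l with
  | nil => rw [theta_nil]; exact nf_one
  | cons k t ih =>
      rw [theta_cons, nf_gen_mul, ih h.tail]
      cases t with
      | nil => simp
      | cons b t' =>
          have : k ≠ b := (List.isChain_cons_cons.mp h).1
          rw [rcons_cons, if_neg (fun hh => this hh.symm)]

lemma theta_rcons (k : Fin n) (l : List (Fin n)) :
    theta n (rcons k l) = gen k * theta n l := by
  cases l with
  | nil => simp [theta_singleton, theta_cons]
  | cons a t =>
      by_cases hak : a = k
      · subst hak
        rw [rcons_cons, if_pos rfl, theta_cons, ← mul_assoc, gen_mul_self, one_mul]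
      · rw [rcons_cons, if_neg hak, theta_cons, theta_cons]

lemma theta_nf_theta (l : List (Fin n)) : theta n (nf n (theta n l)) = theta n l := by
  induction l with
  | nil => rw [theta_nil, nf_one, theta_nil]
  | cons k t ih => rw [theta_cons, nf_gen_mul, theta_rcons, ih]

lemma exists_theta (g : Gam n) : ∃ l : List (Fin n), theta n l = g := by
  refine QuotientGroup.induction_on g ?_
  intro z
  refine FreeGroup.induction_on z ?_ ?_ ?_ ?_
  · exact ⟨[], rfl⟩
  · intro x
    exact ⟨[x], by rw [theta_singleton]; rfl⟩
  · rintro x ⟨l, hl⟩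
    refine ⟨l.reverse, ?_⟩
    rw [theta_reverse, hl]
    rfl
  · rintro x y ⟨l, hl⟩ ⟨m, hm⟩
    refine ⟨l ++ m, ?_⟩
    rw [theta_append, hl, hm]
    rfl

lemma theta_nf (g : Gam n) : theta n (nf n g) = g := by
  obtain ⟨l, rfl⟩ := exists_theta g
  exact theta_nf_theta l

lemma eq_one_of_nf_nil {g : Gam n} (h : nf n g = []) : g = 1 := by
  rw [← theta_nf g, h, theta_nil]

lemma length_rcons (k : Fin n) (l : List (Fin n)) :
    (rcons k l).length ≤ l.length + 1 := by
  cases l with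
  | nil => simp
  | cons a t =>
      by_cases hak : a = k
      · rw [rcons_cons, if_pos hak]; simp only [List.length_cons]; omega
      · rw [rcons_cons, if_neg hak]; simp only [List.length_cons]; omega

lemma length_nf_theta (l : List (Fin n)) : (nf n (theta n l)).length ≤ l.length := by
  induction l with
  | nil => rw [theta_nil, nf_one]
  | cons k t ih =>
      rw [theta_cons, nf_gen_mul]
      calc (rcons k (nf n (theta n t))).length ≤ (nf n (theta n t)).length + 1 :=
            length_rcons _ _
        _ ≤ t.length + 1 := by omega
        _ = (k :: t).length := rfl

lemma glen_le_length (l : List (Fin n)) : glen n (theta n l) ≤ l.length :=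
  Nat.sInf_le ⟨l, rfl, rfl⟩

lemma glen_eq_length (g : Gam n) : glen n g = (nf n g).length := by
  refine le_antisymm ?_ ?_
  · exact Nat.sInf_le ⟨nf n g, rfl, (theta_nf g).symm⟩
  · refine le_csInf ⟨(nf n g).length, nf n g, rfl, (theta_nf g).symm⟩ ?_
    rintro m ⟨l, rfl, hg⟩
    have : g = theta n l := hg
    rw [this]
    exact length_nf_theta l

lemma red_reverse {l : List (Fin n)} (h : l.Chain' (· ≠ ·)) :
    l.reverse.Chain' (· ≠ ·) := by
  unfold List.Chain'
  rw [List.isChain_reverse]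
  exact List.IsChain.imp (fun a b hab => hab.symm) h

lemma nf_inv (g : Gam n) : nf n g⁻¹ = (nf n g).reverse := by
  have h : g⁻¹ = theta n (nf n g).reverse := by rw [theta_reverse, theta_nf]
  rw [h, nf_theta (red_reverse (red_nf g))]

lemma mem_rcons {m k : Fin n} {l : List (Fin n)} (h : m ∈ rcons k l) :
    m = k ∨ m ∈ l := by
  cases l with
  | nil => simp at h; exact Or.inl h
  | cons a t =>
      by_cases hak : a = k
      · rw [rcons_cons, if_pos hak] at h
        exact Or.inr (List.mem_cons_of_mem _ h)
      · rw [rcons_cons, if_neg hak] at h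
        rcases List.mem_cons.mp h with h | h
        · exact Or.inl h
        · exact Or.inr h

lemma mem_nf_theta_mul (l : List (Fin n)) (g : Gam n) :
    ∀ m ∈ nf n (theta n l * g), m ∈ l ∨ m ∈ nf n g := by
  induction l with
  | nil => intro m hm; rw [theta_nil, one_mul] at hm; exact Or.inr hm
  | cons k t ih =>
      intro m hm
      rw [theta_cons, mul_assoc, nf_gen_mul] at hm
      rcases mem_rcons hm with rfl | hm'
      · exact Or.inl (List.mem_cons_self)
      · rcases ih m hm' with h | h
        · exact Or.inl (List.mem_cons_of_mem _ h)
        · exact Or.inr h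

lemma mem_nf_pairSub {i j : Fin n} {t : Gam n}
    (ht : t ∈ Subgroup.closure {gen i, gen j}) :
    ∀ m ∈ nf n t, m = i ∨ m = j := by
  induction ht using Subgroup.closure_induction with
  | mem x hx =>
      simp only [Set.mem_insert_iff, Set.mem_singleton_iff] at hx
      rcases hx with rfl | rfl
      · intro m hm; rw [nf_gen] at hm; simp at hm; exact Or.inl hm
      · intro m hm; rw [nf_gen] at hm; simp at hm; exact Or.inr hm
  | one => intro m hm; rw [nf_one] at hm; simp at hm
  | mul x y hx hy ihx ihy =>
      intro m hm
      have hm' : m ∈ nf n (theta n (nf n x) * y) := by rwa [theta_nf]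
      rcases mem_nf_theta_mul (nf n x) y m hm' with h | h
      · exact ihx m h
      · exact ihy m h
  | inv x hx ih =>
      intro m hm
      rw [nf_inv] at hm
      exact ih m (List.mem_reverse.mp hm)

lemma nf_mul_pairSub {g : Gam n} {w : List (Fin n)} {k i j : Fin n}
    (hnf : nf n g = w ++ [k]) (hki : k ≠ i) (hkj : k ≠ j) {t : Gam n}
    (ht : t ∈ Subgroup.closure {gen i, gen j}) :
    nf n (g * t) = nf n g ++ nf n t := by
  have hred : ((nf n g) ++ nf n t).Chain' (· ≠ ·) := by
    unfold List.Chain'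
    rw [List.isChain_append]
    refine ⟨red_nf g, red_nf t, ?_⟩
    intro x hx y hy
    rw [hnf, List.getLast?_concat] at hx
    simp only [Option.mem_def, Option.some_inj] at hx
    subst hx
    have hy' : y ∈ nf n t := List.mem_of_mem_head? hy
    rcases mem_nf_pairSub ht y hy' with rfl | rfl
    · exact hki
    · exact hkj
  have hgt : g * t = theta n (nf n g ++ nf n t) := by
    rw [theta_append, theta_nf, theta_nf]
  rw [hgt, nf_theta hred]

lemma glen_le_coset {g : Gam n} {w : List (Fin n)} {k i j : Fin n}
    (hnf : nf n g = w ++ [k]) (hki : k ≠ i) (hkj : k ≠ j) {t : Gam n}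
    (ht : t ∈ Subgroup.closure {gen i, gen j}) :
    glen n g ≤ glen n (g * t) := by
  rw [glen_eq_length, glen_eq_length, nf_mul_pairSub hnf hki hkj ht,
    List.length_append]
  omega

lemma mul_gen_last {g : Gam n} {w : List (Fin n)} {k : Fin n}
    (hnf : nf n g = w ++ [k]) : g * gen k = theta n w := by
  have hg : g = theta n (w ++ [k]) := by rw [← hnf, theta_nf]
  rw [hg, theta_append, theta_singleton, mul_assoc, gen_mul_self, mul_one]

lemma red_of_concat {g : Gam n} {w : List (Fin n)} {k : Fin n}
    (hnf : nf n g = w ++ [k]) : w.Chain' (· ≠ ·) := by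
  have := red_nf g
  rw [hnf] at this
  exact (List.isChain_append.mp this).1

lemma nf_mul_gen_last {g : Gam n} {w : List (Fin n)} {k : Fin n}
    (hnf : nf n g = w ++ [k]) : nf n (g * gen k) = w := by
  rw [mul_gen_last hnf, nf_theta (red_of_concat hnf)]

lemma glen_mul_gen_lt {g : Gam n} {w : List (Fin n)} {k : Fin n}
    (hnf : nf n g = w ++ [k]) : glen n (g * gen k) < glen n g := by
  rw [glen_eq_length, glen_eq_length, nf_mul_gen_last hnf, hnf, List.length_append]
  simp

lemma last_ne_of_concat {g : Gam n} {w w' : List (Fin n)} {k : Fin n}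
    (hnf : nf n g = w ++ [k]) (hw : w = w' ++ [k]) : False := by
  have hred := red_nf g
  unfold List.Chain' at hred
  rw [hnf, hw, List.isChain_append] at hred
  exact hred.2.2 k (by rw [List.getLast?_concat]; rfl) k rfl rfl

end NormalForm

/-! ### The Fibonacci recursion -/

section FibSection

variable {n : ℕ}

lemma mkGeo_eq_of_mk_eq {i j : Fin n} (h : i ≠ j) {g g' : Gam n}
    (hc : (QuotientGroup.mk g : Gam n ⧸ pairSub s(i, j)) = QuotientGroup.mk g') :
    mkGeo i j h g = mkGeo i j h g' := by
  unfold mkGeo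
  rw [hc]

lemma mkGeo_mul_gen {i j k : Fin n} (h : i ≠ j) (g : Gam n) (hk : k = i ∨ k = j) :
    mkGeo i j h g = mkGeo i j h (g * gen k) := by
  apply mkGeo_eq_of_mk_eq
  refine (QuotientGroup.mk_mul_of_mem g ?_).symm
  rw [pairSub_mk]
  apply Subgroup.subset_closure
  rcases hk with rfl | rfl
  · exact Set.mem_insert _ _
  · exact Set.mem_insert_of_mem _ rfl

lemma altgeo_mk_congr {p q : Sym2 (Fin n)} (hpq : p = q) (hp : ¬p.IsDiag)
    (hq : ¬q.IsDiag) (g : Gam n) :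
    (AltGeo.mk p hp (QuotientGroup.mk g)) = AltGeo.mk q hq (QuotientGroup.mk g) := by
  subst hpq; rfl

lemma mkGeo_symm {i j : Fin n} (h : i ≠ j) (g : Gam n) :
    mkGeo i j h g = mkGeo j i h.symm g :=
  altgeo_mk_congr Sym2.eq_swap _ _ g

lemma mkGeo_pi {i j : Fin n} (p q : i ≠ j) (g : Gam n) :
    mkGeo i j p g = mkGeo i j q g := rfl

lemma coset_ne_one {g : Gam n} {w : List (Fin n)} {k i j : Fin n}
    (hnf : nf n g = w ++ [k]) (hki : k ≠ i) (hkj : k ≠ j) :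
    (QuotientGroup.mk g : Gam n ⧸ pairSub s(i, j)) ≠ QuotientGroup.mk 1 := by
  intro h
  have h1 : g⁻¹ * 1 ∈ pairSub s(i, j) := QuotientGroup.eq.mp h
  rw [mul_one, pairSub_mk] at h1
  have hg : g ∈ Subgroup.closure {gen i, gen j} :=
    (Subgroup.inv_mem_iff _).mp h1
  have hk : k ∈ nf n g := by
    rw [hnf]; exact List.mem_append_right _ (List.mem_singleton_self k)
  rcases mem_nf_pairSub hg k hk with rfl | rfl
  · exact hki rfl
  · exact hkj rfl

lemma F_rec {F : AltGeo n → ℕ} (hF : IsFib n F) {g : Gam n} {w : List (Fin n)}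
    {k : Fin n} (hnf : nf n g = w ++ [k]) {i j : Fin n} (hij : i ≠ j)
    (hik : i ≠ k) (hjk : j ≠ k) :
    F (mkGeo i j hij g) = F (mkGeo i k hik g) + F (mkGeo j k hjk g) := by
  have hne : (mkGeo i j hij g).coset ≠ QuotientGroup.mk 1 :=
    coset_ne_one hnf (Ne.symm hik) (Ne.symm hjk)
  have hmin : ∀ h : Gam n, QuotientGroup.mk h = (mkGeo i j hij g).coset →
      glen n g ≤ glen n h := by
    intro h hh
    have h1 : h⁻¹ * g ∈ pairSub s(i, j) := QuotientGroup.eq.mp hh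
    have h2 : g⁻¹ * h ∈ pairSub s(i, j) := by
      have := (Subgroup.inv_mem_iff (pairSub s(i, j))).mpr h1
      rwa [mul_inv_rev, inv_inv] at this
    rw [pairSub_mk] at h2
    have hh' : h = g * (g⁻¹ * h) := by group
    rw [hh']
    exact glen_le_coset hnf (Ne.symm hik) (Ne.symm hjk) h2
  exact hF.2 (mkGeo i j hij g) hne g rfl hmin i j k rfl (Ne.symm hik) (Ne.symm hjk)
    (glen_mul_gen_lt hnf)

lemma F_one {F : AltGeo n → ℕ} (hF : IsFib n F) {i j : Fin n} (hij : i ≠ j) :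
    F (mkGeo i j hij 1) = 1 := hF.1 _ rfl

lemma F_pos_aux {F : AltGeo n → ℕ} (hF : IsFib n F) :
    ∀ N : ℕ, ∀ g : Gam n, glen n g ≤ N → ∀ i j : Fin n, ∀ hij : i ≠ j,
      1 ≤ F (mkGeo i j hij g) := by
  intro N
  induction N with
  | zero =>
      intro g hg i j hij
      have hnil : nf n g = [] := List.eq_nil_of_length_eq_zero (by
        have := glen_eq_length g; omega)
      rw [eq_one_of_nf_nil hnil, F_one hF]
  | succ N ih =>
      intro g hg i j hij
      rcases List.eq_nil_or_concat (nf n g) with hnil | ⟨w, k, hnf⟩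
      · rw [eq_one_of_nf_nil hnil, F_one hF]
      · rw [List.concat_eq_append] at hnf
        have hlt : glen n (g * gen k) ≤ N := by
          have h1 := glen_mul_gen_lt hnf; omega
        by_cases hk : k = i ∨ k = j
        · rw [mkGeo_mul_gen hij g hk]
          exact ih _ hlt i j hij
        · push_neg at hk
          obtain ⟨hki, hkj⟩ := hk
          rw [F_rec hF hnf hij (Ne.symm hki) (Ne.symm hkj)]
          have h1 : 1 ≤ F (mkGeo i k (Ne.symm hki) g) := by
            rw [mkGeo_mul_gen (Ne.symm hki) g (Or.inr rfl)]
            exact ih _ hlt i k (Ne.symm hki)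
          omega

lemma F_pos {F : AltGeo n → ℕ} (hF : IsFib n F) (g : Gam n) {i j : Fin n}
    (hij : i ≠ j) : 1 ≤ F (mkGeo i j hij g) :=
  F_pos_aux hF (glen n g) g le_rfl i j hij

lemma F_key {F : AltGeo n → ℕ} (hF : IsFib n F) {g : Gam n} {k : Fin n}
    (hk : ∀ w', nf n g ≠ w' ++ [k]) {i j : Fin n} (hij : i ≠ j)
    (hik : i ≠ k) (hjk : j ≠ k) :
    F (mkGeo i j hij g) < F (mkGeo i k hik g) + F (mkGeo j k hjk g) := by
  rcases List.eq_nil_or_concat (nf n g) with hnil | ⟨w, k₀, hnf⟩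
  · have hg : g = 1 := eq_one_of_nf_nil hnil
    subst hg
    rw [F_one hF, F_one hF, F_one hF]
    omega
  · rw [List.concat_eq_append] at hnf
    have hkk₀ : k₀ ≠ k := fun h => hk w (h ▸ hnf)
    by_cases h₀i : k₀ = i
    · subst h₀i
      have e1 : F (mkGeo j k hjk g) =
          F (mkGeo j k₀ (Ne.symm hij) g) + F (mkGeo k k₀ (Ne.symm hkk₀) g) :=
        F_rec hF hnf hjk (Ne.symm hij) (Ne.symm hkk₀)
      have e2 : F (mkGeo j k₀ (Ne.symm hij) g) = F (mkGeo k₀ j hij g) := by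
        rw [mkGeo_symm (Ne.symm hij) g]
      have h1 : 1 ≤ F (mkGeo k₀ k hik g) := F_pos hF g hik
      have h2 : 1 ≤ F (mkGeo k k₀ (Ne.symm hkk₀) g) := F_pos hF g _
      omega
    · by_cases h₀j : k₀ = j
      · subst h₀j
        have e1 : F (mkGeo i k hik g) =
            F (mkGeo i k₀ hij g) + F (mkGeo k k₀ (Ne.symm hkk₀) g) :=
          F_rec hF hnf hik hij (Ne.symm hkk₀)
        have h1 : 1 ≤ F (mkGeo k₀ k hjk g) := F_pos hF g hjk
        have h2 : 1 ≤ F (mkGeo k k₀ (Ne.symm hkk₀) g) := F_pos hF g _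
        omega
      · have e1 : F (mkGeo i j hij g) =
            F (mkGeo i k₀ (fun h => h₀i h.symm) g) + F (mkGeo j k₀ (fun h => h₀j h.symm) g) :=
          F_rec hF hnf hij (fun h => h₀i h.symm) (fun h => h₀j h.symm)
        have e2 : F (mkGeo i k hik g) =
            F (mkGeo i k₀ (fun h => h₀i h.symm) g) + F (mkGeo k k₀ (Ne.symm hkk₀) g) :=
          F_rec hF hnf hik (fun h => h₀i h.symm) (Ne.symm hkk₀)
        have e3 : F (mkGeo j k hjk g) =
            F (mkGeo j k₀ (fun h => h₀j h.symm) g) + F (mkGeo k k₀ (Ne.symm hkk₀) g) :=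
          F_rec hF hnf hjk (fun h => h₀j h.symm) (Ne.symm hkk₀)
        have h4 : 1 ≤ F (mkGeo k k₀ (Ne.symm hkk₀) g) := F_pos hF g _
        omega

end FibSection

/-! ### Analytic lemmas -/

section Analytic

variable {n : ℕ}

lemma logp_nonneg (t : ℝ) : 0 ≤ logp t := le_max_left _ _

lemma logp_eq_log_max {t : ℝ} (ht : 0 ≤ t) : logp t = Real.log (max 1 t) := by
  rcases le_total 1 t with h | h
  · rw [max_eq_right h, logp, max_eq_right (Real.log_nonneg h)]
  · rw [max_eq_left h, logp, Real.log_one, max_eq_left (Real.log_nonpos ht h)]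

lemma one_le_max_one {t : ℝ} : (1 : ℝ) ≤ max 1 t := le_max_left _ _

lemma max_one_pos {t : ℝ} : (0 : ℝ) < max 1 t := lt_of_lt_of_le one_pos one_le_max_one

lemma logp_mono {s t : ℝ} (hs : 0 ≤ s) (h : s ≤ t) : logp s ≤ logp t := by
  rw [logp_eq_log_max hs, logp_eq_log_max (hs.trans h)]
  exact Real.log_le_log max_one_pos (max_le_max le_rfl h)

/-- The key log⁺ estimate for the vertex relation `z + z' = w₁ w₂`. -/
lemma logp_abs_rel {z z' w1 w2 : ℂ} (h : z + z' = w1 * w2) :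
    logp (Complex.abs z) ≤
      max (logp (Complex.abs w1) + logp (Complex.abs w2)) (logp (Complex.abs z'))
        + Real.log 2 := by
  set M1 := max 1 (Complex.abs w1) with hM1
  set M2 := max 1 (Complex.abs w2) with hM2
  set M3 := max 1 (Complex.abs z') with hM3
  have hM1p : (0:ℝ) < M1 := max_one_pos
  have hM2p : (0:ℝ) < M2 := max_one_pos
  have hM3p : (0:ℝ) < M3 := max_one_pos
  have habs : Complex.abs z ≤ M1 * M2 + M3 := by
    have hz : z = w1 * w2 - z' := by
      rw [← h]; ring
    calc Complex.abs z = Complex.abs (w1 * w2 + -z') := by rw [hz, sub_eq_add_neg]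
      _ ≤ Complex.abs (w1 * w2) + Complex.abs (-z') := Complex.abs.add_le _ _
      _ = Complex.abs w1 * Complex.abs w2 + Complex.abs z' := by
          rw [map_mul, AbsoluteValue.map_neg]
      _ ≤ M1 * M2 + M3 := by
          have h1 : Complex.abs w1 ≤ M1 := le_max_right _ _
          have h2 : Complex.abs w2 ≤ M2 := le_max_right _ _
          have h3 : Complex.abs z' ≤ M3 := le_max_right _ _
          have := Complex.abs.nonneg w1
          have := Complex.abs.nonneg w2
          nlinarith
  have hmax : max 1 (Complex.abs z) ≤ 2 * max (M1 * M2) M3 := by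
    have hb : M3 ≤ max (M1 * M2) M3 := le_max_right _ _
    have ha : M1 * M2 ≤ max (M1 * M2) M3 := le_max_left _ _
    have h1 : (1:ℝ) ≤ M3 := one_le_max_one
    refine max_le (by nlinarith) ?_
    calc Complex.abs z ≤ M1 * M2 + M3 := habs
      _ ≤ 2 * max (M1 * M2) M3 := by nlinarith
  have hlog : Real.log (max (M1 * M2) M3) =
      max (Real.log (M1 * M2)) (Real.log M3) := by
    rcases le_total (M1 * M2) M3 with h' | h'
    · rw [max_eq_right h', max_eq_right (Real.log_le_log (by positivity) h')]
    · rw [max_eq_left h', max_eq_left (Real.log_le_log hM3p h')]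
  calc logp (Complex.abs z) = Real.log (max 1 (Complex.abs z)) :=
        logp_eq_log_max (Complex.abs.nonneg z)
    _ ≤ Real.log (2 * max (M1 * M2) M3) := Real.log_le_log max_one_pos hmax
    _ = Real.log 2 + Real.log (max (M1 * M2) M3) :=
        Real.log_mul (by norm_num) (by positivity)
    _ = Real.log 2 + max (Real.log (M1 * M2)) (Real.log M3) := by rw [hlog]
    _ = Real.log 2 + max (Real.log M1 + Real.log M2) (Real.log M3) := by
        rw [Real.log_mul (ne_of_gt hM1p) (ne_of_gt hM2p)]
    _ = max (logp (Complex.abs w1) + logp (Complex.abs w2)) (logp (Complex.abs z'))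
        + Real.log 2 := by
        rw [logp_eq_log_max (Complex.abs.nonneg w1), logp_eq_log_max (Complex.abs.nonneg w2),
          logp_eq_log_max (Complex.abs.nonneg z')]
        ring

/-- The vertex identity for the extended Hurwitz map. -/
lemma phiRep_identity (a : Fin n → ℂ) {i j k : Fin n} (hij : i ≠ j) (hik : i ≠ k)
    (hjk : j ≠ k) (g : Gam n) :
    phiRep n a s(i, j) g + phiRep n a s(i, j) (g * gen k) =
      phiRep n a s(i, k) g * phiRep n a s(j, k) g := by
  set x : Fin n → ℂ := act n g⁻¹ a with hx
  have hy : act n (g * gen k)⁻¹ a = bmap n k x := by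
    rw [mul_inv_rev, gen_inv, map_mul, Equiv.Perm.mul_apply, act_gen]
    rfl
  set S : Finset (Fin n) := Finset.univ.filter (fun m => m ≠ i ∧ m ≠ j ∧ m ≠ k) with hS
  have hiS : i ∉ S := by simp [hS]
  have hjS : j ∉ S := by simp [hS]
  have hkS : k ∉ S := by simp [hS]
  have hjS' : i ∉ insert j S := by
    simp only [Finset.mem_insert]
    push_neg
    exact ⟨hij, hiS⟩
  have h1 : offPair s(i, j) = insert k S := by
    ext m
    simp only [offPair, Finset.mem_filter, Finset.mem_univ, true_and, Sym2.mem_iff,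
      Finset.mem_insert, hS]
    constructor
    · intro hm
      push_neg at hm
      by_cases hmk : m = k
      · exact Or.inl hmk
      · exact Or.inr ⟨hm.1, hm.2, hmk⟩
    · rintro (rfl | ⟨h1, h2, h3⟩)
      · push_neg; exact ⟨Ne.symm hik, Ne.symm hjk⟩
      · push_neg; exact ⟨h1, h2⟩
  have h2 : offPair s(i, k) = insert j S := by
    ext m
    simp only [offPair, Finset.mem_filter, Finset.mem_univ, true_and, Sym2.mem_iff,
      Finset.mem_insert, hS]
    constructor
    · intro hm
      push_neg at hm
      by_cases hmj : m = j
      · exact Or.inl hmj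
      · exact Or.inr ⟨hm.1, hmj, hm.2⟩
    · rintro (rfl | ⟨h1, h2, h3⟩)
      · push_neg; exact ⟨hij.symm, hjk⟩
      · push_neg; exact ⟨h1, h3⟩
  have h3 : offPair s(j, k) = insert i S := by
    ext m
    simp only [offPair, Finset.mem_filter, Finset.mem_univ, true_and, Sym2.mem_iff,
      Finset.mem_insert, hS]
    constructor
    · intro hm
      push_neg at hm
      by_cases hmi : m = i
      · exact Or.inl hmi
      · exact Or.inr ⟨hmi, hm.1, hm.2⟩
    · rintro (rfl | ⟨h1, h2, h3⟩)
      · push_neg; exact ⟨hij, hik⟩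
      · push_neg; exact ⟨h2, h3⟩
  have h4 : Finset.univ.erase k = insert i (insert j S) := by
    ext m
    simp only [Finset.mem_erase, Finset.mem_univ, and_true, Finset.mem_insert, hS,
      Finset.mem_filter, true_and]
    constructor
    · intro hm
      by_cases hmi : m = i
      · exact Or.inl hmi
      · by_cases hmj : m = j
        · exact Or.inr (Or.inl hmj)
        · exact Or.inr (Or.inr ⟨hmi, hmj, hm⟩)
    · rintro (rfl | rfl | ⟨h1, h2, h3⟩)
      · exact hik
      · exact hjk
      · exact h3
  have hprodS : ∏ m ∈ S, bmap n k x m = ∏ m ∈ S, x m := by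
    refine Finset.prod_congr rfl fun m hm => ?_
    have : m ≠ k := by
      rw [hS] at hm
      exact (Finset.mem_filter.mp hm).2.2.2
    exact bmap_apply_ne n k x this
  have e1 : phiRep n a s(i, j) g = x k * ∏ m ∈ S, x m := by
    rw [phiRep, ← hx, h1, Finset.prod_insert hkS]
  have e2 : phiRep n a s(i, j) (g * gen k) =
      ((∏ m ∈ Finset.univ.erase k, x m) - x k) * ∏ m ∈ S, x m := by
    rw [phiRep, hy, h1, Finset.prod_insert hkS, hprodS, bmap_apply_same]
  have e3 : phiRep n a s(i, k) g = x j * ∏ m ∈ S, x m := by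
    rw [phiRep, ← hx, h2, Finset.prod_insert hjS]
  have e4 : phiRep n a s(j, k) g = x i * ∏ m ∈ S, x m := by
    rw [phiRep, ← hx, h3, Finset.prod_insert hiS]
  have e5 : ∏ m ∈ Finset.univ.erase k, x m = x i * (x j * ∏ m ∈ S, x m) := by
    rw [h4, Finset.prod_insert hjS', Finset.prod_insert hjS]
  rw [e1, e2, e3, e4, e5]
  ring

lemma phiA_mkGeo (a : Fin n → ℂ) {i j : Fin n} (hij : i ≠ j) (g : Gam n) :
    phiA n a (mkGeo i j hij g) = phiRep n a s(i, j) g := rfl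

/-- Bound at the root. -/
lemma logp_phiRep_one (a : Fin n → ℂ) (p : Sym2 (Fin n)) :
    logp (Complex.abs (phiRep n a p 1)) ≤ ∑ m, logp (Complex.abs (a m)) := by
  have e0 : phiRep n a p 1 = ∏ m ∈ offPair p, a m := by
    rw [phiRep, inv_one, map_one]
    rfl
  have hone : (1 : ℝ) ≤ ∏ m ∈ offPair p, max 1 (Complex.abs (a m)) := by
    calc (1 : ℝ) = ∏ _m ∈ offPair p, (1 : ℝ) := (Finset.prod_const_one).symm
      _ ≤ ∏ m ∈ offPair p, max 1 (Complex.abs (a m)) :=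
          Finset.prod_le_prod (fun _ _ => zero_le_one) (fun m _ => one_le_max_one)
  have h1 : Complex.abs (phiRep n a p 1) ≤ ∏ m ∈ offPair p, max 1 (Complex.abs (a m)) := by
    rw [e0, map_prod]
    exact Finset.prod_le_prod (fun m _ => Complex.abs.nonneg _) (fun m _ => le_max_right _ _)
  calc logp (Complex.abs (phiRep n a p 1))
      ≤ logp (∏ m ∈ offPair p, max 1 (Complex.abs (a m))) :=
        logp_mono (Complex.abs.nonneg _) h1
    _ = Real.log (max 1 (∏ m ∈ offPair p, max 1 (Complex.abs (a m)))) :=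
        logp_eq_log_max (by positivity)
    _ = Real.log (∏ m ∈ offPair p, max 1 (Complex.abs (a m))) := by
        rw [max_eq_right hone]
    _ = ∑ m ∈ offPair p, Real.log (max 1 (Complex.abs (a m))) :=
        Real.log_prod (fun m _ => ne_of_gt max_one_pos)
    _ = ∑ m ∈ offPair p, logp (Complex.abs (a m)) :=
        Finset.sum_congr rfl fun m _ => (logp_eq_log_max (Complex.abs.nonneg _)).symm
    _ ≤ ∑ m, logp (Complex.abs (a m)) :=
        Finset.sum_le_sum_of_subset_of_nonneg (Finset.subset_univ _)
          (fun m _ _ => logp_nonneg _)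

end Analytic

/-! ### The main induction -/

section MainInduction

variable {n : ℕ}

lemma root_bound (a : Fin n → ℂ) {F : AltGeo n → ℕ} (hF : IsFib n F) {i j : Fin n}
    (hij : i ≠ j) :
    logp (Complex.abs (phiA n a (mkGeo i j hij (1 : Gam n)))) ≤
      ((∑ m, logp (Complex.abs (a m))) + 1) * (F (mkGeo i j hij 1) : ℝ)
        - Real.log 2 := by
  rw [phiA_mkGeo, F_one hF]
  have h1 := logp_phiRep_one a s(i, j)
  have h2 : Real.log 2 ≤ 1 := le_of_lt (lt_of_lt_of_le Real.log_two_lt_d9 (by norm_num))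
  push_cast
  linarith

lemma main_bound (a : Fin n → ℂ) {F : AltGeo n → ℕ} (hF : IsFib n F) :
    ∀ N : ℕ, ∀ g : Gam n, glen n g ≤ N → ∀ i j : Fin n, ∀ hij : i ≠ j,
      logp (Complex.abs (phiA n a (mkGeo i j hij g))) ≤
        ((∑ m, logp (Complex.abs (a m))) + 1) * (F (mkGeo i j hij g) : ℝ)
          - Real.log 2 := by
  have hB0 : 0 ≤ ∑ m, logp (Complex.abs (a m)) :=
    Finset.sum_nonneg fun m _ => logp_nonneg _
  have hlog2 : Real.log 2 ≤ 1 :=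
    le_of_lt (lt_of_lt_of_le Real.log_two_lt_d9 (by norm_num))
  have hlog2pos : 0 < Real.log 2 := Real.log_pos (by norm_num)
  intro N
  induction N with
  | zero =>
      intro g hg i j hij
      have hnil : nf n g = [] := List.eq_nil_of_length_eq_zero (by
        have := glen_eq_length g; omega)
      rw [eq_one_of_nf_nil hnil]
      exact root_bound a hF hij
  | succ N ih =>
      intro g hg i j hij
      rcases List.eq_nil_or_concat (nf n g) with hnil | ⟨w, k, hnf⟩
      · rw [eq_one_of_nf_nil hnil]
        exact root_bound a hF hij
      · rw [List.concat_eq_append] at hnf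
        have hlt : glen n (g * gen k) ≤ N := by
          have h1 := glen_mul_gen_lt hnf; omega
        by_cases hk : k = i ∨ k = j
        · rw [mkGeo_mul_gen hij g hk]
          exact ih _ hlt i j hij
        · push_neg at hk
          obtain ⟨hki, hkj⟩ := hk
          have hik : i ≠ k := Ne.symm hki
          have hjk : j ≠ k := Ne.symm hkj
          have hnf' : nf n (g * gen k) = w := nf_mul_gen_last hnf
          have hkey : ∀ w', nf n (g * gen k) ≠ w' ++ [k] := by
            intro w' hww
            rw [hnf'] at hww
            exact last_ne_of_concat hnf hww
          -- Fibonacci recursion, pushed to the parent vertex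
          have eF : F (mkGeo i j hij g) =
              F (mkGeo i k hik (g * gen k)) + F (mkGeo j k hjk (g * gen k)) := by
            rw [F_rec hF hnf hij hik hjk, mkGeo_mul_gen hik g (Or.inr rfl),
              mkGeo_mul_gen hjk g (Or.inr rfl)]
          have hKey : F (mkGeo i j hij (g * gen k)) <
              F (mkGeo i k hik (g * gen k)) + F (mkGeo j k hjk (g * gen k)) :=
            F_key hF hkey hij hik hjk
          -- vertex identity
          have ephi : phiA n a (mkGeo i j hij g) + phiA n a (mkGeo i j hij (g * gen k)) =
              phiA n a (mkGeo i k hik g) * phiA n a (mkGeo j k hjk g) := by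
            rw [phiA_mkGeo, phiA_mkGeo, phiA_mkGeo, phiA_mkGeo]
            exact phiRep_identity a hij hik hjk g
          have hA2 := logp_abs_rel ephi
          rw [mkGeo_mul_gen hik g (Or.inr rfl), mkGeo_mul_gen hjk g (Or.inr rfl)] at hA2
          have hih1 := ih _ hlt i k hik
          have hih2 := ih _ hlt j k hjk
          have hih3 := ih _ hlt i j hij
          have hcast : (F (mkGeo i j hij g) : ℝ) =
              (F (mkGeo i k hik (g * gen k)) : ℝ) +
                (F (mkGeo j k hjk (g * gen k)) : ℝ) := by
            exact_mod_cast congrArg (fun t : ℕ => (t : ℝ)) eF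
          have hkeyR : (F (mkGeo i j hij (g * gen k)) : ℝ) + 1 ≤
              (F (mkGeo i k hik (g * gen k)) : ℝ) +
                (F (mkGeo j k hjk (g * gen k)) : ℝ) := by
            exact_mod_cast hKey
          rw [hcast]
          rcases le_total
              (logp (Complex.abs (phiA n a (mkGeo i k hik (g * gen k)))) +
                logp (Complex.abs (phiA n a (mkGeo j k hjk (g * gen k)))))
              (logp (Complex.abs (phiA n a (mkGeo i j hij (g * gen k))))) with hm | hm
          · rw [max_eq_right hm] at hA2
            have hmul : ((∑ m, logp (Complex.abs (a m))) + 1) *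
                (F (mkGeo i j hij (g * gen k)) : ℝ) ≤
                ((∑ m, logp (Complex.abs (a m))) + 1) *
                  ((F (mkGeo i k hik (g * gen k)) : ℝ) +
                    (F (mkGeo j k hjk (g * gen k)) : ℝ) - 1) :=
              mul_le_mul_of_nonneg_left (by linarith) (by linarith)
            nlinarith [hih3, hA2, hmul]
          · rw [max_eq_left hm] at hA2
            nlinarith [hih1, hih2, hA2]

end MainInduction

/-- **Upper Fibonacci bound.** For any `μ`-Hurwitz map, `log⁺|φ|` has an upper
Fibonacci bound on `𝒜`. -/
theorem upper_fibonacci_bound (n : ℕ) (hn : 3 ≤ n) (μ : ℂ) (a : Fin n → ℂ)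
    (ha : MH n a = μ) (F : AltGeo n → ℕ) (hF : IsFib n F) :
    ∃ K : ℝ, 0 < K ∧ ∃ C : ℝ, 0 < C ∧
      ∀ γ : AltGeo n, logp (‖phiA n a γ‖) ≤ K * (F γ : ℝ) + C := by
  have hB0 : 0 ≤ ∑ m, logp (Complex.abs (a m)) :=
    Finset.sum_nonneg fun m _ => logp_nonneg _
  refine ⟨(∑ m, logp (Complex.abs (a m))) + 1, by linarith, 1, one_pos, ?_⟩
  intro γ
  obtain ⟨p, nd, c⟩ := γ
  revert nd c
  induction p using Sym2.ind with
  | _ i j =>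
      intro nd c
      have hij : i ≠ j := fun h => nd (Sym2.mk_isDiag_iff.mpr h)
      refine QuotientGroup.induction_on c ?_
      intro g
      have hmk : (AltGeo.mk s(i, j) nd (QuotientGroup.mk g)) = mkGeo i j hij g := rfl
      rw [hmk]
      change logp (Complex.abs (phiA n a (mkGeo i j hij g))) ≤ _
      have h1 := main_bound a hF (glen n g) g le_rfl i j hij
      have h2 : 0 < Real.log 2 := Real.log_pos (by norm_num)
      linarith

end MarkoffHurwitz
end
end
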